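/- Let (G,R) be a cyclically ordered abelian group and n ≥ 2 an integer. If G is n-regular, then the linear part l(G), equipped with its induced linear order, is an n-regular linearly ordered abelian group. In particular, if G is regular then l(G) is regular. -/

import Mathlib

section CyclicOrder

variable {G : Type*}

/-- A compatible cyclic order on an abelian group. -/
structure IsCyclicOrder [AddCommGroup G] (R : G → G → G → Prop) : Prop where
  strict : ∀ a b c : G, R a b c → a ≠ b ∧ b ≠ c ∧ c ≠ a
  cyc : ∀ a b c : G, R a b c → R b c a
  asymm : ∀ a b c : G, R a b c → ¬ R a c b
  trans' : ∀ a b c d : G, R a b c → R a c d → R a b d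
  total : ∀ a b c : G, a ≠ b → b ≠ c → c ≠ a → R a b c ∨ R a c b
  compat : ∀ a b c d : G, R a b c → R (a + d) (b + d) (c + d)

/-- `RChain R m y` expresses `R (y 0, y 1, …, y (m-1))`, i.e.
`R (y i) (y (i+1)) (y (m-1))` for all `i ≤ m - 3`. -/
def RChain (R : G → G → G → Prop) (m : ℕ) (y : ℕ → G) : Prop :=
  ∀ i : ℕ, i + 3 ≤ m → R (y i) (y (i + 1)) (y (m - 1))

/-- `G` is `n`-regular. -/
def NRegularC [AddCommGroup G] (R : G → G → G → Prop) (n : ℕ) : Prop :=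
  ∀ x : ℕ → G,
    RChain R (n + 2) (fun i => if i = 0 then 0 else if i = n + 1 then -(x n) else x i) →
    ∃ g : G, (R (x 1) (n • g) (x n) ∨ n • g = x 1 ∨ n • g = x n) ∧
      RChain R (n + 1) (fun i => if i = n then x n else i • g)

/-- `G` is c-`n`-regular. -/
def CNRegular [AddCommGroup G] (R : G → G → G → Prop) (n : ℕ) : Prop :=
  ∀ x : ℕ → G,
    RChain R (n + 1) (fun i => if i = 0 then 0 else x i) →
    ∃ g : G, (n • g = x 1 ∨ n • g = x n ∨ R (x 1) (n • g) (x n)) ∧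
      RChain R (n + 1) (fun i => if i = n then x n else i • g)

open Classical in
/-- Addition on the unwound `ℤ × G` of `(G, R)`. -/
noncomputable def uwAdd [AddCommGroup G] (R : G → G → G → Prop) (p q : ℤ × G) : ℤ × G :=
  if p.2 = 0 ∨ q.2 = 0 ∨ R 0 p.2 (p.2 + q.2) then (p.1 + q.1, p.2 + q.2)
  else (p.1 + q.1 + 1, p.2 + q.2)

open Classical in
/-- Negation on the unwound. -/
noncomputable def uwNeg [AddCommGroup G] (p : ℤ × G) : ℤ × G :=
  if p.2 = 0 then (-p.1, 0) else (-p.1 - 1, -p.2)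

/-- The order on the unwound. -/
def uwLt [AddCommGroup G] (R : G → G → G → Prop) (p q : ℤ × G) : Prop :=
  p.1 < q.1 ∨ (p.1 = q.1 ∧ R 0 p.2 q.2) ∨ (p.1 = q.1 ∧ p.2 = 0 ∧ q.2 ≠ 0)

/-- Natural scalar multiplication on the unwound. -/
noncomputable def uwNsmul [AddCommGroup G] (R : G → G → G → Prop) : ℕ → ℤ × G → ℤ × G
  | 0, _ => (0, 0)
  | n + 1, x => uwAdd R (uwNsmul R n x) x

open Classical in
/-- Integer scalar multiplication on the unwound. -/
noncomputable def uwZsmul [AddCommGroup G] (R : G → G → G → Prop) (n : ℤ) (x : ℤ × G) :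
    ℤ × G :=
  if 0 ≤ n then uwNsmul R n.toNat x else uwNeg (uwNsmul R (-n).toNat x)

/-- The linear part `l(G)` of `(G, R)`. -/
def lpart [AddCommGroup G] (R : G → G → G → Prop) : Set G :=
  {x : G | ∀ n : ℤ, uwLt R (uwZsmul R n ((0 : ℤ), x)) ((1 : ℤ), (0 : G))}

/-- The linear order on the linear part: `x < y` iff `R 0 (y - x) (-(y-x))`. -/
def lLt [AddCommGroup G] (R : G → G → G → Prop) (x y : G) : Prop :=
  R 0 (y - x) (x - y)

/-- `l(G)` is an `n`-regular linearly ordered group. -/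
def lpartNRegular [AddCommGroup G] (R : G → G → G → Prop) (n : ℕ) : Prop :=
  ∀ x : ℕ → G, (∀ i : ℕ, i < n → x i ∈ lpart R) →
    (∀ i : ℕ, i + 1 < n → lLt R (x i) (x (i + 1))) →
    ∃ g ∈ lpart R, (lLt R (x 0) (n • g) ∨ x 0 = n • g) ∧
      (lLt R (n • g) (x (n - 1)) ∨ n • g = x (n - 1))

/-- The unwound is an `n`-regular linearly ordered group. -/
def uwNRegular [AddCommGroup G] (R : G → G → G → Prop) (n : ℕ) : Prop :=
  ∀ x : ℕ → ℤ × G, (∀ i : ℕ, i + 1 < n → uwLt R (x i) (x (i + 1))) →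
    ∃ g : ℤ × G, (uwLt R (x 0) (uwNsmul R n g) ∨ x 0 = uwNsmul R n g) ∧
      (uwLt R (uwNsmul R n g) (x (n - 1)) ∨ uwNsmul R n g = x (n - 1))

/-- `K(G) = G/l(G)` contains a primitive `n`-th root of `1`,
i.e. an element of order exactly `n`. -/
def KPrimitiveRoot [AddCommGroup G] (R : G → G → G → Prop) (n : ℕ) : Prop :=
  ∃ x : G, n • x ∈ lpart R ∧ ∀ k : ℕ, 0 < k → k < n → k • x ∉ lpart R

/-- `K(G) = G/l(G)` is `n`-divisible. -/
def KDivisibleBy [AddCommGroup G] (R : G → G → G → Prop) (n : ℕ) : Prop :=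
  ∀ x : G, ∃ y : G, x - n • y ∈ lpart R

end CyclicOrder


namespace LpartAux

set_option linter.unusedSectionVars false

variable {G : Type*} [AddCommGroup G] {R : G → G → G → Prop}

/-- `x` is a "positive" element for the cyclic order with basepoint `0`. -/
def Pos (R : G → G → G → Prop) (x : G) : Prop := R 0 x (-x)

/-- Quantitative smallness: all forward multiples are nonzero and never wrap. -/
def SmallB (R : G → G → G → Prop) (z : G) : Prop :=
  ∀ k : ℕ, 1 ≤ k → k • z ≠ 0 ∧ R 0 (k • z) ((k + 1) • z)

lemma rmove {a b c a' b' c' : G} (hr : R a b c) (e1 : a' = a) (e2 : b' = b)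
    (e3 : c' = c) : R a' b' c' := by subst e1; subst e2; subst e3; exact hr

lemma cyc2 (h : IsCyclicOrder R) {a b c : G} (hr : R a b c) : R c a b :=
  h.cyc _ _ _ (h.cyc _ _ _ hr)

lemma wrapT (h : IsCyclicOrder R) {a b : G} (H1 : R 0 a (a + b))
    (H2 : R 0 (a + b) b) : False := by
  have c1 : R 0 (-b) a :=
    cyc2 h (rmove (h.compat 0 (a+b) b (-b) H2) (by abel) (by abel) (by abel))
  have c2 : R 0 b (-a) :=
    h.cyc _ _ _ (rmove (h.compat 0 a (a+b) (-a) H1) (by abel) (by abel) (by abel))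
  have c3 : R 0 (-a) (-(a+b)) :=
    h.cyc _ _ _ (rmove (h.compat 0 (a+b) b (-(a+b)) H2) (by abel) (by abel) (by abel))
  have c4 : R 0 (-(a+b)) (-b) :=
    cyc2 h (rmove (h.compat 0 a (a+b) (-(a+b)) H1) (by abel) (by abel) (by abel))
  have t1 : R 0 b (-(a+b)) := h.trans' 0 b (-a) (-(a+b)) c2 c3
  have t2 : R 0 b (-b) := h.trans' 0 b (-(a+b)) (-b) t1 c4
  have t3 : R 0 a b := h.trans' 0 a (a+b) b H1 H2
  have t4 : R 0 a (-b) := h.trans' 0 a b (-b) t3 t2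
  exact (h.asymm 0 a (-b) t4) c1

lemma posAdd (h : IsCyclicOrder R) {p q : G} (hp : Pos R p) (hq : Pos R q) :
    R 0 p (p + q) := by
  have hp0 : (0:G) ≠ p := (h.strict _ _ _ hp).1
  have hq0 : (0:G) ≠ q := (h.strict _ _ _ hq).1
  have hs0 : p + q ≠ 0 := by
    intro he
    have hqe : q = -p := by rw [eq_neg_iff_add_eq_zero, add_comm]; exact he
    unfold Pos at hq
    rw [hqe, neg_neg] at hq
    exact h.asymm _ _ _ hp hq
  have hps : p ≠ p + q := fun he => hq0 (left_eq_add.mp he).symm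
  rcases h.total 0 p (p+q) hp0 hps hs0 with hA | hA
  · exact hA
  exfalso
  have c1 : R 0 (-p) q :=
    cyc2 h (rmove (h.compat 0 (p+q) p (-p) hA) (by abel) (by abel) (by abel))
  have t1 : R 0 (-p) (-q) := h.trans' 0 (-p) q (-q) c1 hq
  have hqs : q ≠ p + q := fun he => hp0 (right_eq_add.mp he).symm
  rcases h.total 0 q (p+q) hq0 hqs hs0 with hB | hB
  · exact wrapT h (rmove hB rfl rfl (by abel) : R 0 q (q + p))
      (rmove hA rfl (by abel) rfl : R 0 (q + p) p)
  · have c2 : R 0 (-q) p :=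
      cyc2 h (rmove (h.compat 0 (p+q) q (-q) hB) (by abel) (by abel) (by abel))
    have t2 : R 0 (-p) p := h.trans' 0 (-p) (-q) p t1 c2
    exact h.asymm _ _ _ hp t2

lemma posNeg (h : IsCyclicOrder R) {p q : G} (hp : Pos R p) (hq : Pos R q) :
    R 0 p (-q) := by
  have hp0 : (0:G) ≠ p := (h.strict _ _ _ hp).1
  have hq0 : (0:G) ≠ q := (h.strict _ _ _ hq).1
  have hpnq : p ≠ -q := by
    intro he
    unfold Pos at hp
    rw [he, neg_neg] at hp
    exact h.asymm _ _ _ hq hp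
  have hnq0 : -q ≠ 0 := neg_ne_zero.mpr (Ne.symm hq0)
  rcases h.total 0 p (-q) hp0 hpnq hnq0 with hA | hA
  · exact hA
  · exfalso
    have c : R 0 (p + q) q :=
      h.cyc _ _ _ (rmove (h.compat 0 (-q) p q hA) (by abel) (by abel) rfl)
    exact h.asymm _ _ _ (rmove (posAdd h hq hp) rfl rfl (by abel) : R 0 q (p + q)) c

lemma between (h : IsCyclicOrder R) {u v w : G} (h1 : R 0 u v) (h2 : R 0 u w)
    (h3 : R u v w) : R 0 v w := by
  have hv0 : v ≠ 0 := (h.strict _ _ _ h1).2.2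
  have hw0 : w ≠ 0 := (h.strict _ _ _ h2).2.2
  have hvw : v ≠ w := (h.strict _ _ _ h3).2.1
  rcases h.total 0 v w (Ne.symm hv0) hvw hw0 with hX | hX
  · exact hX
  · exfalso
    have a1 : R w 0 u := cyc2 h h2
    have a2 : R w v 0 := h.cyc _ _ _ hX
    have a3 : R w v u := h.trans' w v 0 u a2 a1
    exact (h.asymm u v w h3) (cyc2 h a3)

lemma rot (h : IsCyclicOrder R) {a b c : G} (h1 : R 0 a b) (h2 : R 0 b c) :
    R a b c := by
  have b1 : R b 0 a := cyc2 h h1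
  have b2 : R b c 0 := h.cyc _ _ _ h2
  have b3 : R b c a := h.trans' b c 0 a b2 b1
  exact cyc2 h b3

lemma addLt (h : IsCyclicOrder R) {α z a : G} (hα : Pos R α) (hz : Pos R z)
    (ha : Pos R a) (hza : R 0 z a) : R 0 (α + z) (α + a) := by
  have c : R α (α + z) (α + a) :=
    rmove (h.compat 0 z a α hza) (by abel) (by abel) (by abel)
  exact between h (posAdd h hα hz) (posAdd h hα ha) c

lemma posOfLt (h : IsCyclicOrder R) {z a : G} (hza : R 0 z a) (hpa : Pos R a)
    (ha2 : R 0 a (a + a)) : Pos R z := by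
  have hz0 : (0:G) ≠ z := (h.strict _ _ _ hza).1
  by_cases h2 : z + z = 0
  · exfalso
    have s1 : R 0 (a + z) z :=
      h.cyc _ _ _ (rmove (h.compat 0 z a z hza) (by abel) h2.symm rfl)
    have t : R 0 (a + z) a := h.trans' 0 (a+z) z a s1 hza
    have s2 : R a (a + z) (a + a) :=
      rmove (h.compat 0 z a a hza) (by abel) (by abel) rfl
    have t2 : R a 0 (a + a) := h.trans' a 0 (a + z) (a+a) (cyc2 h t) s2
    exact h.asymm _ _ _ ha2 (h.cyc _ _ _ t2)
  · have hzene : z ≠ -z := by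
      intro he; apply h2; nth_rewrite 2 [he]; exact add_neg_cancel z
    have hnz0 : -z ≠ 0 := neg_ne_zero.mpr (Ne.symm hz0)
    rcases h.total 0 z (-z) hz0 hzene hnz0 with hA | hA
    · exact hA
    · exfalso
      have hposnz : Pos R (-z) := by unfold Pos; rw [neg_neg]; exact hA
      have hz' := posNeg h hpa hposnz
      rw [neg_neg] at hz'
      exact h.asymm _ _ _ hza hz'

lemma chainUp (h : IsCyclicOrder R) {z : G} (hz : SmallB R z) (i j : ℕ)
    (hi : 1 ≤ i) (hij : i < j) : R 0 (i • z) (j • z) := by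
  have hij' : i + 1 ≤ j := hij
  induction j, hij' using Nat.le_induction with
  | base => exact (hz i hi).2
  | succ n hn ih =>
    exact h.trans' 0 (i • z) (n • z) ((n+1) • z) (ih (by omega)) (hz n (by omega)).2

lemma smallPos (h : IsCyclicOrder R) {z : G} (hz : SmallB R z) :
    ∀ k, 1 ≤ k → Pos R (k • z) ∧ R 0 (k • z) (k • z + k • z) := by
  intro k hk
  have h2k : R 0 (k • z) (k • z + k • z) := by
    have := chainUp h hz k (k + k) hk (by omega)
    rwa [add_nsmul] at this
  refine ⟨?_, h2k⟩
  have hw0 : (0:G) ≠ k • z := Ne.symm (hz k hk).1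
  have hne2 : k • z + k • z ≠ 0 := by rw [← add_nsmul]; exact (hz (k+k) (by omega)).1
  have hwne : k • z ≠ -(k • z) := by
    intro he; apply hne2; nth_rewrite 2 [he]; exact add_neg_cancel _
  have hnw0 : -(k • z) ≠ 0 := neg_ne_zero.mpr (hz k hk).1
  rcases h.total 0 (k • z) (-(k • z)) hw0 hwne hnw0 with hA | hA
  · exact hA
  · exfalso
    have c : R 0 (k•z + k•z) (k•z) :=
      h.cyc _ _ _ (rmove (h.compat 0 (-(k•z)) (k•z) (k•z) hA) (by abel) (by abel) rfl)
    exact h.asymm _ _ _ h2k c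

lemma posOfSmall (h : IsCyclicOrder R) {z : G} (hz : SmallB R z) : Pos R z := by
  have := (smallPos h hz 1 le_rfl).1
  rwa [one_nsmul] at this

lemma smallTwo (h : IsCyclicOrder R) {z : G} (hz : SmallB R z) : R 0 z (z + z) := by
  have := (smallPos h hz 1 le_rfl).2
  rwa [one_nsmul] at this

lemma smallOfLt (h : IsCyclicOrder R) {a z : G} (ha : SmallB R a) (hza : R 0 z a) :
    SmallB R z := by
  have hpa : Pos R a := posOfSmall h ha
  have hpz : Pos R z := posOfLt h hza hpa (smallTwo h ha)
  have inv : ∀ k, 1 ≤ k → (k • z = k • a ∨ R 0 (k • z) (k • a)) := by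
    intro k hk
    induction k, hk using Nat.le_induction with
    | base => right; simp only [one_nsmul]; exact hza
    | succ n hn ih =>
      have hpa' : Pos R (n • a) := (smallPos h ha n hn).1
      have hpz' : Pos R (n • z) := by
        rcases ih with he | hl
        · rw [he]; exact hpa'
        · exact posOfLt h hl hpa' (smallPos h ha n hn).2
      right
      have step2 : R 0 (n • a + z) (n • a + a) := addLt h hpa' hpz hpa hza
      rcases ih with he | hl
      · rw [succ_nsmul z n, succ_nsmul a n, he]; exact step2
      · have c : R z (n•z + z) (n•a + z) :=
          rmove (h.compat 0 (n•z) (n•a) z hl) (by abel) rfl rfl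
        have k1 : R 0 z (n•z + z) :=
          rmove (posAdd h hpz hpz') rfl rfl (by abel)
        have k2 : R 0 z (n•a + z) :=
          rmove (posAdd h hpz hpa') rfl rfl (by abel)
        have step1 : R 0 (n•z + z) (n•a + z) := between h k1 k2 c
        have := h.trans' 0 (n•z + z) (n•a + z) (n•a + a) step1 step2
        rw [succ_nsmul z n, succ_nsmul a n]
        exact this
  have hposk : ∀ k, 1 ≤ k → Pos R (k • z) := by
    intro k hk
    rcases inv k hk with he | hl
    · rw [he]; exact (smallPos h ha k hk).1
    · exact posOfLt h hl (smallPos h ha k hk).1 (smallPos h ha k hk).2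
  intro k hk
  refine ⟨?_, ?_⟩
  · rcases inv k hk with he | hl
    · rw [he]; exact (ha k hk).1
    · exact fun h0 => (h.strict _ _ _ hl).1 h0.symm
  · have := posAdd h (hposk k hk) hpz
    rwa [← succ_nsmul] at this

lemma posAddPos (h : IsCyclicOrder R) {p q : G} (hsp : SmallB R p) (hsq : SmallB R q)
    (hpp : Pos R p) (hpq : Pos R q) : Pos R (p + q) := by
  by_cases he : p = q
  · rw [he]
    have := (smallPos h hsq 2 (by omega)).1
    rwa [two_nsmul] at this
  · have hp0 : (0:G) ≠ p := (h.strict _ _ _ hpp).1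
    have hq0 : (0:G) ≠ q := (h.strict _ _ _ hpq).1
    rcases h.total 0 p q hp0 he (Ne.symm hq0) with hA | hA
    · have s : R 0 (q + p) (q + q) := addLt h hpq hpp hpq hA
      have hq2 : Pos R (q + q) := by
        have := (smallPos h hsq 2 (by omega)).1; rwa [two_nsmul] at this
      have hq4 : R 0 (q + q) ((q + q) + (q + q)) := by
        have := (smallPos h hsq 2 (by omega)).2; rwa [two_nsmul] at this
      have hres : Pos R (q + p) := posOfLt h s hq2 hq4
      rwa [add_comm q p] at hres
    · have s : R 0 (p + q) (p + p) := addLt h hpp hpq hpp hA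
      have hp2 : Pos R (p + p) := by
        have := (smallPos h hsp 2 (by omega)).1; rwa [two_nsmul] at this
      have hp4 : R 0 (p + p) ((p + p) + (p + p)) := by
        have := (smallPos h hsp 2 (by omega)).2; rwa [two_nsmul] at this
      exact posOfLt h s hp2 hp4

lemma posSub (h : IsCyclicOrder R) {u v : G} (hu : Pos R u) (hv : Pos R v)
    (huv : R 0 u v) : Pos R (v - u) := by
  have hne : u ≠ v := (h.strict _ _ _ huv).2.1
  have hd1 : v - u ≠ 0 := sub_ne_zero.mpr (Ne.symm hne)
  have hd2 : u - v ≠ 0 := sub_ne_zero.mpr hne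
  have hdd : v - u ≠ u - v := by
    intro he
    have h4 : v + v = u + u := sub_eq_sub_iff_add_eq_add.mp he
    have m1 : R 0 (u + u) (u + v) := addLt h hu hu hv huv
    have m2 : R 0 (u + v) (u + u) := by
      have hm := addLt h hv hu hv huv
      rw [h4] at hm
      exact rmove hm rfl (by abel) rfl
    exact h.asymm _ _ _ m1 m2
  rcases h.total 0 (v - u) (u - v) (Ne.symm hd1) hdd hd2 with hA | hA
  · unfold Pos; rwa [neg_sub]
  · exfalso
    have hpuv : Pos R (u - v) := by unfold Pos; rwa [neg_sub]
    have hr : R 0 v u := rmove (posAdd h hv hpuv) rfl rfl (by abel)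
    exact h.asymm _ _ _ huv hr

lemma ltR (h : IsCyclicOrder R) {u v : G} (hu : Pos R u) (hd : Pos R (v - u)) :
    R 0 u v :=
  rmove (posAdd h hu hd) rfl rfl (by abel)

lemma lLt_iff_pos {a b : G} : lLt R a b ↔ Pos R (b - a) := by
  unfold lLt Pos; rw [neg_sub]

lemma mem_lpart_iff (h : IsCyclicOrder R) (x : G) :
    x ∈ lpart R ↔ (x = 0 ∨ SmallB R x) := by
  classical
  constructor
  · intro hx
    by_cases hx0 : x = 0
    · exact Or.inl hx0
    refine Or.inr ?_
    by_contra hs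
    have hex : ∃ k, 1 ≤ k ∧ ¬(k • x ≠ 0 ∧ R 0 (k • x) ((k + 1) • x)) := by
      by_contra hno
      push_neg at hno
      exact hs (fun k hk => hno k hk)
    obtain ⟨hk01, hk0bad⟩ := Nat.find_spec hex
    set k0 := Nat.find hex with hk0def
    have hmin : ∀ j, j < k0 → 1 ≤ j → (j • x ≠ 0 ∧ R 0 (j • x) ((j + 1) • x)) := by
      intro j hj h1
      by_contra hb
      exact Nat.find_min hex hj ⟨h1, hb⟩
    have hk0x : k0 • x ≠ 0 := by
      intro h0
      rcases Nat.lt_or_ge 1 k0 with hgt | hle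
      · have hr := (hmin (k0 - 1) (by omega) (by omega)).2
        have e : k0 - 1 + 1 = k0 := by omega
        rw [e, h0] at hr
        exact (h.strict _ _ _ hr).2.2 rfl
      · have e : k0 = 1 := by omega
        rw [e, one_nsmul] at h0
        exact hx0 h0
    have hk0R : ¬ R 0 (k0 • x) ((k0 + 1) • x) := fun hr => hk0bad ⟨hk0x, hr⟩
    have hcomp : ∀ j, j ≤ k0 → uwNsmul R j ((0:ℤ), x) = ((0:ℤ), j • x) := by
      intro j
      induction j with
      | zero => intro _; simp [uwNsmul, zero_nsmul]
      | succ m ih =>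
        intro hm
        rw [uwNsmul, ih (by omega), uwAdd]
        rw [if_pos ?cond]
        case cond =>
          by_cases hm0 : m = 0
          · left; rw [hm0, zero_nsmul]
          · right; right
            have hr := (hmin m (by omega) (by omega)).2
            rwa [succ_nsmul] at hr
        simp only [add_zero]
        rw [← succ_nsmul]
    have hwrap : uwNsmul R (k0 + 1) ((0:ℤ), x) = ((1:ℤ), (k0 + 1) • x) := by
      rw [uwNsmul, hcomp k0 le_rfl, uwAdd, if_neg]
      · simp only [add_zero, zero_add]
        rw [← succ_nsmul]
      · rintro (h1 | h2 | h3)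
        · exact hk0x h1
        · exact hx0 h2
        · rw [← succ_nsmul] at h3
          exact hk0R h3
    have hm := hx ((k0 : ℤ) + 1)
    rw [uwZsmul, if_pos (by positivity)] at hm
    have e : ((k0 : ℤ) + 1).toNat = k0 + 1 := by omega
    rw [e, hwrap] at hm
    unfold uwLt at hm
    rcases hm with hlt | ⟨_, hr⟩ | ⟨_, hz, hne⟩
    · exact absurd hlt (lt_irrefl _)
    · exact (h.strict _ _ _ hr).2.2 rfl
    · exact hne rfl
  · intro hx m
    have hns : ∀ k : ℕ, uwNsmul R k ((0:ℤ), x) = ((0:ℤ), k • x) := by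
      intro k
      induction k with
      | zero => simp [uwNsmul, zero_nsmul]
      | succ m ih =>
        rw [uwNsmul, ih, uwAdd, if_pos ?cond]
        case cond =>
          rcases hx with h0 | hS
          · right; left; exact h0
          · by_cases hm0 : m = 0
            · left; rw [hm0, zero_nsmul]
            · right; right
              have hr := (hS m (by omega)).2
              rwa [succ_nsmul] at hr
        simp only [add_zero]
        rw [← succ_nsmul]
    rw [uwZsmul]
    split_ifs with hmn
    · rw [hns]
      unfold uwLt
      left
      norm_num
    · rw [hns, uwNeg]
      split_ifs with h2
      · unfold uwLt; left; norm_num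
      · unfold uwLt; left; norm_num

end LpartAux

open LpartAux

/-- If `G` is `n`-regular then its linear part `l(G)` is an `n`-regular linearly
ordered group; in particular if `G` is regular then `l(G)` is regular. -/
theorem lpart_nregular_of_nregular (G : Type*) [AddCommGroup G]
    (R : G → G → G → Prop) (h : IsCyclicOrder R) :
    (∀ n : ℕ, 2 ≤ n → NRegularC R n → lpartNRegular R n) ∧
    ((∀ n : ℕ, 2 ≤ n → NRegularC R n) → ∀ n : ℕ, 2 ≤ n → lpartNRegular R n) := by
  have main : ∀ n : ℕ, 2 ≤ n → NRegularC R n → lpartNRegular R n := by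
    intro n hn hreg X hmem hchain
    by_cases hx0 : X 0 = 0
    · -- take g = 0
      refine ⟨0, (mem_lpart_iff h 0).mpr (Or.inl rfl), ?_, ?_⟩
      · right; rw [smul_zero]; exact hx0
      · rcases (mem_lpart_iff h _).mp (hmem (n-1) (by omega)) with hz | hs
        · right; rw [smul_zero, hz]
        · left
          rw [lLt_iff_pos, smul_zero, sub_zero]
          exact posOfSmall h hs
    · -- main case : all the x i are positive
      have hSm : ∀ i, i < n → X i ≠ 0 → SmallB R (X i) := by
        intro i hi hne0
        rcases (mem_lpart_iff h _).mp (hmem i hi) with hz | hs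
        · exact absurd hz hne0
        · exact hs
      have hne : ∀ i, i < n → X i ≠ 0 := by
        intro i
        induction i with
        | zero => intro _; exact hx0
        | succ k ih =>
          intro hk h0
          have hc := hchain k (by omega)
          rw [h0] at hc
          unfold lLt at hc
          rw [zero_sub, sub_zero] at hc
          by_cases hk0 : X k = 0
          · rw [hk0, neg_zero] at hc
            exact (h.strict _ _ _ hc).1 rfl
          · have hp : Pos R (X k) := posOfSmall h (hSm k (by omega) hk0)
            exact h.asymm _ _ _ hp hc
      have hSm' : ∀ i, i < n → SmallB R (X i) := fun i hi => hSm i hi (hne i hi)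
      have hpos : ∀ i, i < n → Pos R (X i) := fun i hi => posOfSmall h (hSm' i hi)
      -- the positive differences
      have hdiff : ∀ i, i + 1 < n → Pos R (X (i+1) - X i) := by
        intro i hi
        exact lLt_iff_pos.mp (hchain i hi)
      have hstep : ∀ i, i + 1 < n → R 0 (X i) (X (i+1)) := by
        intro i hi
        exact rmove (posAdd h (hpos i (by omega)) (hdiff i hi)) rfl rfl (by abel)
      -- X 0 < X i for 1 ≤ i
      have hlt0 : ∀ i, 1 ≤ i → i < n → Pos R (X i - X 0) := by
        intro i hi
        induction i, hi using Nat.le_induction with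
        | base => intro h1; exact hdiff 0 (by omega)
        | succ k hk ih =>
          intro hkn
          have h1 : Pos R (X k - X 0) := ih (by omega)
          have h2 : Pos R (X (k+1) - X k) := hdiff k (by omega)
          have hs1 : SmallB R (X k - X 0) := by
            refine smallOfLt h (hSm' k (by omega)) ?_
            exact rmove (posAdd h h1 (hpos 0 (by omega))) rfl rfl (by abel)
          have hs2 : SmallB R (X (k+1) - X k) := by
            refine smallOfLt h (hSm' (k+1) (by omega)) ?_
            exact rmove (posAdd h h2 (hpos k (by omega))) rfl rfl (by abel)
          have := posAddPos h hs2 hs1 h2 h1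
          exact rmove this rfl (by abel) (by abel)
      have hltN : Pos R (X (n-1) - X 0) := hlt0 (n-1) (by omega) (by omega)
      have hposN : Pos R (X (n-1)) := hpos (n-1) (by omega)
      have hSmN : SmallB R (X (n-1)) := hSm' (n-1) (by omega)
      -- build the chain hypothesis for NRegularC
      have hch0 : RChain R (n + 2)
          (fun i => if i = 0 then 0 else if i = n + 1
            then -((fun j => X (j - 1)) n) else (fun j => X (j - 1)) i) := by
        intro i hi
        have e : n + 2 - 1 = n + 1 := by omega
        rw [e]
        simp only
        rw [if_neg (show ¬ n + 1 = 0 by omega)]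
        simp only [if_true]
        by_cases hi0 : i = 0
        · subst hi0
          rw [if_pos rfl, if_neg (show ¬ (0+1 : ℕ) = 0 by omega),
            if_neg (show ¬ (0+1 : ℕ) = n + 1 by omega)]
          rw [show (0+1-1 : ℕ) = 0 from rfl]
          exact posNeg h (hpos 0 (by omega)) (hpos (n-1) (by omega))
        · rw [if_neg hi0, if_neg (show ¬ i = n + 1 by omega),
            if_neg (show ¬ i + 1 = 0 by omega),
            if_neg (show ¬ i + 1 = n + 1 by omega)]
          rw [show i + 1 - 1 = i from rfl]
          refine rot h ?_ ?_
          · have hd : Pos R (X i - X (i-1)) := by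
              have hcc := hchain (i-1) (by omega)
              rw [show i - 1 + 1 = i by omega] at hcc
              exact lLt_iff_pos.mp hcc
            have := posAdd h (hpos (i-1) (by omega)) hd
            exact rmove this rfl rfl (by abel)
          · exact posNeg h (hpos i (by omega)) (hpos (n-1) (by omega))
      obtain ⟨g, hD1, hch⟩ := hreg (fun j => X (j - 1)) hch0
      -- extract R 0 g (X (n-1)) from the conclusion chain
      have hg0N : R 0 g (X (n - 1)) := by
        have hg := hch 0 (by omega)
        have e : n + 1 - 1 = n := by omega
        rw [e] at hg
        simp only at hg
        rw [if_neg (show ¬ (0:ℕ) = n by omega), if_neg (show ¬ (1:ℕ) = n by omega)] at hg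
        simpa using hg
      have hSmg : SmallB R g := smallOfLt h hSmN hg0N
      have hgmem : g ∈ lpart R := (mem_lpart_iff h g).mpr (Or.inr hSmg)
      have hRN : R 0 (X 0) (X (n-1)) := ltR h (hpos 0 (by omega)) hltN
      have hD1' : R (X 0) (n • g) (X (n-1)) ∨ n • g = X 0 ∨ n • g = X (n-1) := hD1
      refine ⟨g, hgmem, ?_⟩
      rcases hD1' with hmid | he1 | heN
      · have c1 : R (X (n-1)) (X 0) (n • g) := cyc2 h hmid
        have c2 : R (X (n-1)) 0 (X 0) := cyc2 h hRN
        have hR0N : R 0 (n • g) (X (n-1)) :=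
          h.cyc _ _ _ (h.trans' (X (n-1)) 0 (X 0) (n • g) c2 c1)
        have hng0 : n • g ≠ 0 := Ne.symm (h.strict _ _ _ hR0N).1
        have hR00 : R 0 (X 0) (n • g) := by
          rcases h.total 0 (X 0) (n • g) (Ne.symm hx0) (h.strict _ _ _ hmid).1 hng0
            with hA | hA
          · exact hA
          · exfalso
            have d1 : R (X 0) 0 (n • g) := cyc2 h hA
            have d2 := h.trans' (X 0) 0 (n • g) (X (n-1)) d1 hmid
            exact h.asymm _ _ _ hRN (h.cyc _ _ _ d2)
        have hposng : Pos R (n • g) := posOfLt h hR0N hposN (smallTwo h hSmN)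
        constructor
        · left; rw [lLt_iff_pos]; exact posSub h (hpos 0 (by omega)) hposng hR00
        · left; rw [lLt_iff_pos]; exact posSub h hposng hposN hR0N
      · constructor
        · right; exact he1.symm
        · left; rw [lLt_iff_pos, he1]; exact hltN
      · constructor
        · left; rw [lLt_iff_pos, heN]; exact hltN
        · right; exact heN
  exact ⟨main, fun H n hn => main n hn (H n hn)⟩
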